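/- Let C ≥ 1, let (Γ_k), (Γ_k⁺), (Γ_k⁰), (Γ_k⁻) be nonincreasing sequences of positive real numbers, and let (ε_k) be a sequence of nonnegative real numbers with ε_k → 0, such that for every k: C⁻¹·Γ_k ≤ Γ_k⁺ + Γ_k⁰ + Γ_k⁻ ≤ C·Γ_k, Γ_{k+1}⁺ ≤ e⁻¹·Γ_k⁺ + ε_k·Γ_k, |Γ_{k+1}⁰ − Γ_k⁰| ≤ ε_k·Γ_k, and Γ_{k+1}⁻ ≥ e·Γ_k⁻ − ε_k·Γ_k. Then at least one of the following holds: (a) for every ε > 0 there exists K such that Γ_k⁰ + Γ_k⁻ ≤ ε·Γ_k⁺ for all k ≥ K; or (b) for every ε > 0 there exists K such that Γ_k⁺ + Γ_k⁻ ≤ ε·Γ_k⁰ for all k ≥ K. -/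

import Mathlib

open Filter

set_option maxHeartbeats 1000000 in
private lemma mz_aux (a : ℝ) (ha0 : 0 < a) (ha1 : a < 1) (N₀ : ℕ)
    (x y η : ℕ → ℝ) (hx : ∀ k, 0 < x k) (hy : ∀ k, 0 < y k) (hη : ∀ k, 0 ≤ η k)
    (hηs : ∀ c > (0:ℝ), ∃ K, ∀ k ≥ K, η k ≤ c)
    (hstep : ∀ k ≥ N₀, x (k+1) ≤ a * x k + η k * (x k + y k))
    (hys : ∀ k ≥ N₀, |y (k+1) - y k| ≤ η k * (x k + y k)) :
    (∀ δ > (0:ℝ), ∃ K, ∀ k ≥ K, y k ≤ δ * x k) ∨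
    (∀ δ > (0:ℝ), ∃ K, ∀ k ≥ K, x k ≤ δ * y k) := by
  have trap : ∀ δ > (0:ℝ), ∀ k ≥ N₀, η k * (1+δ)^2 ≤ (1-a)*δ → x k ≤ δ * y k →
      x (k+1) ≤ δ * y (k+1) := by
    intro δ hδ k hk hηk hxy
    have h1 := hstep k hk
    have h2 := (abs_le.mp (hys k hk)).1
    have hy0 := hy k
    have e0 : a * x k ≤ a * (δ * y k) := mul_le_mul_of_nonneg_left hxy ha0.le
    have e1 : η k * (x k + y k) ≤ η k * (1+δ) * y k := by
      have := mul_le_mul_of_nonneg_left hxy (hη k)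
      nlinarith
    have e2 : y k * (η k * (1+δ)^2) ≤ y k * ((1-a)*δ) :=
      mul_le_mul_of_nonneg_left hηk hy0.le
    have e3 : δ * (η k * (x k + y k)) ≤ δ * (η k * (1+δ) * y k) :=
      mul_le_mul_of_nonneg_left e1 hδ.le
    have e4 : δ * (y k - η k * (x k + y k)) ≤ δ * y (k+1) :=
      mul_le_mul_of_nonneg_left (by linarith) hδ.le
    nlinarith
  by_cases hcase : ∀ δ > (0:ℝ), ∃ K, ∀ k ≥ K, y k ≤ δ * x k
  · exact Or.inl hcase
  push_neg at hcase
  obtain ⟨δ0, hδ0, hbig⟩ := hcase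
  right
  obtain ⟨Δ, hΔ0, hΔeq⟩ : ∃ Δ : ℝ, 0 < Δ ∧ δ0 * Δ = 1 :=
    ⟨δ0⁻¹, inv_pos.mpr hδ0, mul_inv_cancel₀ hδ0.ne'⟩
  have h1Δ : (0:ℝ) < 1 + Δ := by linarith
  obtain ⟨K₁, hK₁⟩ := hηs ((1-a)*Δ/(1+Δ)^2)
    (div_pos (mul_pos (by linarith) hΔ0) (by positivity))
  obtain ⟨k₁, hk₁ge, hk₁⟩ := hbig (max K₁ N₀)
  have hk₁N : N₀ ≤ k₁ := le_trans (le_max_right _ _) hk₁ge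
  have hk₁K : K₁ ≤ k₁ := le_trans (le_max_left _ _) hk₁ge
  have hηΔ : ∀ k ≥ K₁, η k * (1+Δ)^2 ≤ (1-a)*Δ := by
    intro k hk
    have h := mul_le_mul_of_nonneg_right (hK₁ k hk) (by positivity : (0:ℝ) ≤ (1+Δ)^2)
    rwa [div_mul_cancel₀] at h
    exact pow_ne_zero 2 (ne_of_gt h1Δ)
  have hinit : x k₁ ≤ Δ * y k₁ := by
    have h5 : Δ * (δ0 * x k₁) < Δ * y k₁ := mul_lt_mul_of_pos_left hk₁ hΔ0
    have h6 : Δ * (δ0 * x k₁) = x k₁ := by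
      rw [show Δ * (δ0 * x k₁) = (δ0 * Δ) * x k₁ from by ring, hΔeq, one_mul]
    linarith
  have htrapΔ : ∀ k ≥ k₁, x k ≤ Δ * y k := by
    intro k hk
    induction k, hk using Nat.le_induction with
    | base => exact hinit
    | succ n hn ih =>
        exact trap Δ hΔ0 n (le_trans hk₁N hn) (hηΔ n (le_trans hk₁K hn)) ih
  intro δ hδ
  obtain ⟨δ', hδ'0, hδ'δ, hδ'Δ, hδ'1⟩ :
      ∃ δ' : ℝ, 0 < δ' ∧ δ' ≤ δ ∧ δ' ≤ Δ ∧ δ' ≤ 1 :=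
    ⟨min δ (min Δ 1), lt_min hδ (lt_min hΔ0 one_pos), min_le_left _ _,
      le_trans (min_le_right _ _) (min_le_left _ _),
      le_trans (min_le_right _ _) (min_le_right _ _)⟩
  have h1δ' : (0:ℝ) < 1 + δ' := by linarith
  obtain ⟨q, hq0, hq1, hqgap⟩ : ∃ q : ℝ, 0 < q ∧ q < 1 ∧ a + (1-a)/2 ≤ q :=
    ⟨(1+a)/2, by linarith, by linarith, by linarith⟩
  obtain ⟨K₂, hK₂⟩ := hηs (min ((1-a)*δ'/(8*(1+Δ))) ((1-a)*δ'/(1+δ')^2))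
    (lt_min (div_pos (mul_pos (by linarith) hδ'0) (by positivity))
      (div_pos (mul_pos (by linarith) hδ'0) (by positivity)))
  have claim : ∀ n, x (max K₂ k₁ + n) ≤ max δ' (q^n * Δ) * y (max K₂ k₁ + n) := by
    intro n
    induction n with
    | zero =>
        rw [pow_zero, one_mul, max_eq_right hδ'Δ]
        exact htrapΔ _ (le_trans (le_max_right _ _) (Nat.le_add_right _ _))
    | succ n ih =>
        have hkN : N₀ ≤ max K₂ k₁ + n :=
          le_trans (le_trans hk₁N (le_max_right _ _)) (Nat.le_add_right _ _)
        have hkK₂ : K₂ ≤ max K₂ k₁ + n :=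
          le_trans (le_max_left _ _) (Nat.le_add_right _ _)
        have hkk₁ : k₁ ≤ max K₂ k₁ + n :=
          le_trans (le_max_right _ _) (Nat.le_add_right _ _)
        set k := max K₂ k₁ + n with hkdef
        have hsucc : max K₂ k₁ + (n+1) = k + 1 := rfl
        rw [hsucc]
        by_cases hxy : x k ≤ δ' * y k
        · have hηδ' : η k * (1+δ')^2 ≤ (1-a)*δ' := by
            have h := mul_le_mul_of_nonneg_right
              (le_trans (hK₂ k hkK₂) (min_le_right _ _))
              (by positivity : (0:ℝ) ≤ (1+δ')^2)
            rwa [div_mul_cancel₀] at h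
            exact pow_ne_zero 2 (ne_of_gt h1δ')
          have h := trap δ' hδ'0 k hkN hηδ' hxy
          exact h.trans (mul_le_mul_of_nonneg_right (le_max_left _ _) (hy _).le)
        · push_neg at hxy
          have hδr : δ' ≤ q^n * Δ := by
            rcases le_or_gt δ' (q^n * Δ) with h | h
            · exact h
            · exfalso
              rw [max_eq_left h.le] at ih
              exact absurd ih (not_le.mpr hxy)
          rw [max_eq_right hδr] at ih
          have hr0 : 0 < q^n * Δ := mul_pos (pow_pos hq0 n) hΔ0
          have hxΔ : x k ≤ Δ * y k := htrapΔ k hkk₁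
          have ht0 : 0 ≤ η k * (1+Δ) := mul_nonneg (hη k) h1Δ.le
          have ht : η k * (1+Δ) ≤ (1-a)*δ'/8 := by
            have h8 : (1-a)*δ'/(8*(1+Δ)) * (1+Δ) = (1-a)*δ'/8 := by
              field_simp
            have h := mul_le_mul_of_nonneg_right
              (le_trans (hK₂ k hkK₂) (min_le_left _ _)) h1Δ.le
            rw [h8] at h
            exact h
          have hy0 := hy k
          have hsum : η k * (x k + y k) ≤ (η k * (1+Δ)) * y k := by
            have := mul_le_mul_of_nonneg_left hxΔ (hη k)
            nlinarith
          have h1 : (1 - η k * (1+Δ)) * y k ≤ y (k+1) := by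
            have h2 := (abs_le.mp (hys k hkN)).1
            nlinarith
          have h2 : x (k+1) ≤ a * x k + (η k * (1+Δ)) * y k := by
            have := hstep k hkN
            linarith
          have hscal : a*δ' + (η k * (1+Δ)) + δ'*q*(η k * (1+Δ)) ≤ δ'*q := by
            have hδq : δ'*q ≤ 1 := mul_le_one₀ hδ'1 hq0.le hq1.le
            have hqt : δ'*q*(η k * (1+Δ)) ≤ 1*(η k * (1+Δ)) :=
              mul_le_mul_of_nonneg_right hδq ht0
            have hgap : δ'*(a + (1-a)/2) ≤ δ'*q := mul_le_mul_of_nonneg_left hqgap hδ'0.le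
            nlinarith [ht, ht0]
          have s1 : δ' * (a * x k + (η k * (1+Δ)) * y k)
              ≤ (a*δ' + (η k * (1+Δ))) * ((q^n * Δ) * y k) := by
            have e1 : a*δ'*(x k) ≤ a*δ'*((q^n * Δ)*y k) :=
              mul_le_mul_of_nonneg_left ih (mul_nonneg ha0.le hδ'0.le)
            have e2 : (η k * (1+Δ))*(δ'*y k) ≤ (η k * (1+Δ))*(x k) :=
              mul_le_mul_of_nonneg_left hxy.le ht0
            have e3 : (η k * (1+Δ))*(x k) ≤ (η k * (1+Δ))*((q^n * Δ)*y k) :=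
              mul_le_mul_of_nonneg_left ih ht0
            nlinarith
          have s2 : (a*δ' + (η k * (1+Δ))) * ((q^n * Δ) * y k)
              ≤ (δ'*q*(1 - η k * (1+Δ))) * ((q^n * Δ) * y k) := by
            apply mul_le_mul_of_nonneg_right _ (mul_pos hr0 hy0).le
            nlinarith
          have key : a * x k + (η k * (1+Δ)) * y k
              ≤ q*(q^n * Δ)*((1 - η k * (1+Δ)) * y k) := by
            have s3 : δ' * (q*(q^n * Δ)*((1 - η k * (1+Δ)) * y k))
                = (δ'*q*(1 - η k * (1+Δ))) * ((q^n * Δ) * y k) := by ring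
            have := (s1.trans s2).trans_eq s3.symm
            exact (mul_le_mul_iff_right₀ hδ'0).mp this
          calc x (k+1) ≤ a * x k + (η k * (1+Δ)) * y k := h2
            _ ≤ q*(q^n * Δ)*((1 - η k * (1+Δ)) * y k) := key
            _ ≤ q*(q^n * Δ)*(y (k+1)) :=
                mul_le_mul_of_nonneg_left h1 (mul_pos hq0 hr0).le
            _ = q^(n+1)*Δ*(y (k+1)) := by rw [pow_succ]; ring
            _ ≤ max δ' (q^(n+1)*Δ) * y (k+1) :=
                mul_le_mul_of_nonneg_right (le_max_right _ _) (hy _).le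
  obtain ⟨n, hn⟩ : ∃ n, q^n * Δ ≤ δ' := by
    obtain ⟨n, hn⟩ := exists_pow_lt_of_lt_one (div_pos hδ'0 hΔ0) hq1
    exact ⟨n, (le_div_iff₀ hΔ0).mp hn.le⟩
  refine ⟨max K₂ k₁ + n, fun k hk => ?_⟩
  obtain ⟨m, rfl⟩ : ∃ m, k = max K₂ k₁ + m := ⟨k - max K₂ k₁, by omega⟩
  have hmn : n ≤ m := by omega
  have hqm : q^m * Δ ≤ δ' :=
    le_trans (mul_le_mul_of_nonneg_right (pow_le_pow_of_le_one hq0.le hq1.le hmn) hΔ0.le) hn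
  have h := claim m
  rw [max_eq_left hqm] at h
  exact h.trans (mul_le_mul_of_nonneg_right hδ'δ (hy _).le)

set_option maxHeartbeats 1000000 in
private lemma mz_final (E C : ℝ) (hE1 : 1 < E) (hC0 : 0 < C)
    (Γ Γm : ℕ → ℝ) (u v ε : ℕ → ℝ)
    (hu : ∀ k, 0 < u k) (hv : ∀ k, 0 < v k)
    (hεnn : ∀ k, 0 ≤ ε k) (hΓ0 : ∀ k, 0 < Γ k)
    (N₀ : ℕ)
    (hΓb : ∀ k ≥ N₀, Γ k ≤ 2*C*(u k + v k))
    (hmb : ∀ k, (E-1)*Γm k ≤ ε k * Γ k)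
    (hηs : ∀ c > (0:ℝ), ∃ K, ∀ k ≥ K, 2*C*ε k ≤ c)
    (hsmall : ∀ δ > (0:ℝ), ∃ K, ∀ k ≥ K, v k ≤ δ * u k) :
    ∀ δ > (0:ℝ), ∃ K, ∀ k ≥ K, v k + Γm k ≤ δ * u k := by
  intro δ hδ
  have hE1' : (0:ℝ) < E - 1 := by linarith
  obtain ⟨K₁, hK₁⟩ := hsmall (δ/2) (by linarith)
  obtain ⟨K₂, hK₂⟩ := hηs ((δ/2)*(E-1)/(1+δ/2))
    (div_pos (mul_pos (by linarith) hE1') (by linarith))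
  refine ⟨max N₀ (max K₁ K₂), fun k hk => ?_⟩
  have hkN : N₀ ≤ k := le_trans (le_max_left _ _) hk
  have hkK₁ : K₁ ≤ k := le_trans (le_trans (le_max_left _ _) (le_max_right _ _)) hk
  have hkK₂ : K₂ ≤ k := le_trans (le_trans (le_max_right _ _) (le_max_right _ _)) hk
  have a1 : v k ≤ δ/2 * u k := hK₁ k hkK₁
  have hu0 := hu k
  -- (E-1) * Γm k ≤ ε k * Γ k ≤ ε k * (2C(u+v)) = (2Cε)(u+v) ≤ c(u+v) ≤ c(1+δ/2)u
  have b1 : ε k * Γ k ≤ ε k * (2*C*(u k + v k)) :=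
    mul_le_mul_of_nonneg_left (hΓb k hkN) (hεnn k)
  have huv0 : 0 ≤ u k + v k := by nlinarith [hv k]
  have b2 : (2*C*ε k) * (u k + v k) ≤ ((δ/2)*(E-1)/(1+δ/2)) * (u k + v k) :=
    mul_le_mul_of_nonneg_right (hK₂ k hkK₂) huv0
  have hc0 : 0 ≤ (δ/2)*(E-1)/(1+δ/2) :=
    (div_pos (mul_pos (by linarith) hE1') (by linarith)).le
  have b3 : ((δ/2)*(E-1)/(1+δ/2)) * (u k + v k)
      ≤ ((δ/2)*(E-1)/(1+δ/2)) * ((1+δ/2) * u k) :=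
    mul_le_mul_of_nonneg_left (by linarith) hc0
  have b4 : ((δ/2)*(E-1)/(1+δ/2)) * ((1+δ/2) * u k) = (E-1)*((δ/2) * u k) := by
    rw [show ((δ/2)*(E-1)/(1+δ/2)) * ((1+δ/2) * u k)
        = ((δ/2)*(E-1)/(1+δ/2) * (1+δ/2)) * u k from by ring,
      div_mul_cancel₀ _ (by positivity : (1:ℝ)+δ/2 ≠ 0)]
    ring
  have b5 : (E-1)*Γm k ≤ (E-1)*((δ/2) * u k) := by
    calc (E-1)*Γm k ≤ ε k * Γ k := hmb k
      _ ≤ (2*C*ε k) * (u k + v k) := by linarith [b1]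
      _ ≤ _ := b2.trans (b3.trans_eq b4)
  have b6 : Γm k ≤ (δ/2) * u k := (mul_le_mul_iff_right₀ hE1').mp b5
  linarith

set_option maxHeartbeats 1000000 in
/-- Lemma 3.8, a discrete version of the Merle–Zaag lemma: for tail-supremum
sequences attached to the positive, neutral, and negative spectral parts,
either the neutral and negative parts are negligible compared with the positive
part, or the positive and negative parts are negligible compared with the
neutral part. -/
theorem stmt_12
    (C : ℝ) (hC : 1 ≤ C)
    (Γ Γp Γ0 Γm ε : ℕ → ℝ)
    (hΓanti : Antitone Γ) (hΓpanti : Antitone Γp)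
    (hΓ0anti : Antitone Γ0) (hΓmanti : Antitone Γm)
    (hΓpos : ∀ k, 0 < Γ k) (hΓppos : ∀ k, 0 < Γp k)
    (hΓ0pos : ∀ k, 0 < Γ0 k) (hΓmpos : ∀ k, 0 < Γm k)
    (hεnonneg : ∀ k, 0 ≤ ε k)
    (hεlim : Filter.Tendsto ε Filter.atTop (nhds 0))
    (hlower : ∀ k, C⁻¹ * Γ k ≤ Γp k + Γ0 k + Γm k)
    (hupper : ∀ k, Γp k + Γ0 k + Γm k ≤ C * Γ k)
    (hp : ∀ k, Γp (k + 1) ≤ (Real.exp 1)⁻¹ * Γp k + ε k * Γ k)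
    (h0 : ∀ k, |Γ0 (k + 1) - Γ0 k| ≤ ε k * Γ k)
    (hm : ∀ k, Γm (k + 1) ≥ Real.exp 1 * Γm k - ε k * Γ k) :
    (∀ δ > (0:ℝ), ∃ K : ℕ, ∀ k ≥ K, Γ0 k + Γm k ≤ δ * Γp k)
    ∨ (∀ δ > (0:ℝ), ∃ K : ℕ, ∀ k ≥ K, Γp k + Γm k ≤ δ * Γ0 k) := by
  have hC0 : (0:ℝ) < C := lt_of_lt_of_le one_pos hC
  have hE1 : 1 < Real.exp 1 := by have := Real.add_one_le_exp 1; linarith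
  have hE1' : (0:ℝ) < Real.exp 1 - 1 := by linarith
  have hEpos : (0:ℝ) < Real.exp 1 := by linarith
  -- Step 1 : the negative part is directly controlled.
  have hmb : ∀ k, (Real.exp 1 - 1) * Γm k ≤ ε k * Γ k := by
    intro k
    have h1 := hm k
    have h2 := hΓmanti (Nat.le_succ k)
    nlinarith
  -- smallness of 2*C*ε
  have hηs : ∀ c > (0:ℝ), ∃ K, ∀ k ≥ K, 2*C*ε k ≤ c := by
    intro c hc
    obtain ⟨K, hK⟩ := Filter.eventually_atTop.mp
      ((hεlim.eventually_lt_const (show (0:ℝ) < c/(2*C) by positivity)).mono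
        fun k h => h.le)
    refine ⟨K, fun k hk => ?_⟩
    have := mul_le_mul_of_nonneg_left (hK k hk) (by positivity : (0:ℝ) ≤ 2*C)
    rwa [show 2*C*(c/(2*C)) = c from by field_simp] at this
  -- choose N₀ with ε k ≤ (E-1)/(2*C) for k ≥ N₀
  obtain ⟨N₀, hN₀⟩ : ∃ N₀, ∀ k ≥ N₀, ε k ≤ (Real.exp 1 - 1)/(2*C) :=
    Filter.eventually_atTop.mp
      ((hεlim.eventually_lt_const
        (show (0:ℝ) < (Real.exp 1 - 1)/(2*C) by positivity)).mono fun k h => h.le)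
  -- for k ≥ N₀, Γ k ≤ 2C(Γp k + Γ0 k)
  have hΓb : ∀ k ≥ N₀, Γ k ≤ 2*C*(Γp k + Γ0 k) := by
    intro k hk
    have h2 : Γ k ≤ C * (Γp k + Γ0 k + Γm k) := by
      have h3 := mul_le_mul_of_nonneg_left (hlower k) hC0.le
      rwa [← mul_assoc, mul_inv_cancel₀ hC0.ne', one_mul] at h3
    have h4 := hmb k
    have h8 : C * ((Real.exp 1 - 1)/(2*C)) = (Real.exp 1 - 1)/2 := by
      field_simp
    have h5 : C * ε k ≤ (Real.exp 1 - 1)/2 := by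
      have := mul_le_mul_of_nonneg_left (hN₀ k hk) hC0.le
      rwa [h8] at this
    have key : (Real.exp 1 - 1) * Γ k ≤ (Real.exp 1 - 1) * (2*C*(Γp k + Γ0 k)) := by
      nlinarith [mul_le_mul_of_nonneg_left h2 hE1'.le,
        mul_le_mul_of_nonneg_left h4 hC0.le,
        mul_le_mul_of_nonneg_right h5 (hΓpos k).le]
    exact (mul_le_mul_iff_right₀ hE1').mp key
  -- apply the core dichotomy
  have hdich := mz_aux (Real.exp 1)⁻¹ (inv_pos.mpr hEpos) (inv_lt_one_of_one_lt₀ hE1) N₀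
    Γp Γ0 (fun k => 2*C*ε k) hΓppos hΓ0pos
    (fun k => mul_nonneg (by linarith : (0:ℝ) ≤ 2*C) (hεnonneg k)) hηs
    (fun k hk => by
      have h1 := hp k
      have h2 := mul_le_mul_of_nonneg_left (hΓb k hk) (hεnonneg k)
      nlinarith)
    (fun k hk => by
      have h2 := mul_le_mul_of_nonneg_left (hΓb k hk) (hεnonneg k)
      have := h0 k
      calc |Γ0 (k+1) - Γ0 k| ≤ ε k * Γ k := h0 k
        _ ≤ 2*C*ε k * (Γp k + Γ0 k) := by nlinarith)
  rcases hdich with h | h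
  · exact Or.inl (mz_final (Real.exp 1) C hE1 hC0 Γ Γm Γp Γ0 ε hΓppos hΓ0pos
      hεnonneg hΓpos N₀ hΓb hmb hηs h)
  · refine Or.inr (mz_final (Real.exp 1) C hE1 hC0 Γ Γm Γ0 Γp ε hΓ0pos hΓppos
      hεnonneg hΓpos N₀ (fun k hk => ?_) hmb hηs h)
    have := hΓb k hk
    nlinarith
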